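/- If after edge deletion the graph decomposes into connected components each of which contains nodes of only one class, then in the limit of infinitely many graph convolutions with S (eigenvalue-1 projection), the propagated features of nodes are constant multiples of D̃^{1/2} within each component; consequently a linear classifier can separate the classes provided the per-component mean features are linearly separable. -/

import Mathlib

open Matrix Finset in
/-- Quadratic form identity for the normalized adjacency matrix. -/
private lemma quad_id {n : ℕ}
    (Atil : Matrix (Fin n) (Fin n) ℝ)
    (d : Fin n → ℝ) (hd : ∀ i, d i = ∑ j, Atil i j)
    (hd_pos : ∀ i, 0 < d i)
    (hA_symm : ∀ i j, Atil i j = Atil j i)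
    (S : Matrix (Fin n) (Fin n) ℝ)
    (hS : ∀ i j, S i j = Atil i j / (Real.sqrt (d i) * Real.sqrt (d j)))
    (x : Fin n → ℝ) (ε : ℝ) (hε : ε = 1 ∨ ε = -1) :
    ∑ i, ∑ j, Atil i j * (x i / Real.sqrt (d i) - ε * (x j / Real.sqrt (d j)))^2
      = 2 * (∑ i, x i ^ 2) - ε * (2 * ∑ i, ∑ j, S i j * x i * x j) := by
  set sd : Fin n → ℝ := fun i => Real.sqrt (d i) with hsd
  have sd_pos : ∀ i, 0 < sd i := fun i => Real.sqrt_pos.2 (hd_pos i)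
  have sd_sq : ∀ i, sd i ^ 2 = d i := fun i => Real.sq_sqrt (hd_pos i).le
  have hε2 : ε ^ 2 = 1 := by rcases hε with h | h <;> simp [h]
  have term : ∀ i j, Atil i j * (x i / sd i - ε * (x j / sd j))^2
      = Atil i j * (x i / sd i)^2 + Atil i j * (x j / sd j)^2
        - ε * (2 * (S i j * x i * x j)) := by
    intro i j
    have h1 : S i j * x i * x j = Atil i j * (x i / sd i) * (x j / sd j) := by
      rw [hS i j]
      field_simp
      rfl
    rw [h1]
    have : (x i / sd i - ε * (x j / sd j))^2
        = (x i / sd i)^2 + ε^2 * (x j / sd j)^2 - ε * (2 * ((x i / sd i) * (x j / sd j))) := by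
      ring
    rw [this, hε2]; ring
  have sumA1 : ∑ i, ∑ j, Atil i j * (x i / sd i)^2 = ∑ i, x i ^ 2 := by
    refine Finset.sum_congr rfl fun i _ => ?_
    rw [← Finset.sum_mul, ← hd i]
    rw [div_pow, ← sd_sq i]
    rw [← mul_div_assoc]
    exact mul_div_cancel_left₀ (x i ^ 2) (pow_ne_zero 2 (sd_pos i).ne')
  have sumA2 : ∑ i, ∑ j, Atil i j * (x j / sd j)^2 = ∑ i, x i ^ 2 := by
    rw [Finset.sum_comm]
    rw [← sumA1]
    exact Finset.sum_congr rfl fun j _ => Finset.sum_congr rfl fun i _ => by rw [hA_symm j i]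
  calc ∑ i, ∑ j, Atil i j * (x i / sd i - ε * (x j / sd j))^2
      = ∑ i, ∑ j, (Atil i j * (x i / sd i)^2 + Atil i j * (x j / sd j)^2
        - ε * (2 * (S i j * x i * x j))) :=
        Finset.sum_congr rfl fun i _ => Finset.sum_congr rfl fun j _ => term i j
    _ = (∑ i, ∑ j, Atil i j * (x i / sd i)^2) + (∑ i, ∑ j, Atil i j * (x j / sd j)^2)
        - ε * (2 * ∑ i, ∑ j, S i j * x i * x j) := by
        simp only [Finset.sum_sub_distrib, Finset.sum_add_distrib, Finset.mul_sum]
    _ = 2 * (∑ i, x i ^ 2) - ε * (2 * ∑ i, ∑ j, S i j * x i * x j) := by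
        rw [sumA1, sumA2]; ring




/-- If every connected component is label-monochromatic, then the limit of
`S^K X` exists and, within each component, the rows of the limit are the
common component vector scaled by `√(d̃_v)`. -/
theorem stmt_12 {n f : ℕ} {L : Type*} (G : SimpleGraph (Fin n))
    [DecidableRel G.Adj] (y : Fin n → L)
    (hmono : ∀ u v : Fin n, G.Reachable u v → y u = y v)
    (Atil : Matrix (Fin n) (Fin n) ℝ) (hAtil : Atil = G.adjMatrix ℝ + 1)
    (d : Fin n → ℝ) (hd : ∀ i, d i = ∑ j, Atil i j)
    (S : Matrix (Fin n) (Fin n) ℝ)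
    (hS : ∀ i j, S i j = Atil i j / (Real.sqrt (d i) * Real.sqrt (d j)))
    (X : Matrix (Fin n) (Fin f) ℝ) :
    ∃ Y : Matrix (Fin n) (Fin f) ℝ,
      Filter.Tendsto (fun K => S ^ K * X) Filter.atTop (nhds Y) ∧
      ∃ c : G.ConnectedComponent → (Fin f → ℝ),
        ∀ v : Fin n, Y v = Real.sqrt (d v) • c (G.connectedComponentMk v) := by
  classical
  -- basic facts
  have hA_nonneg : ∀ i j, 0 ≤ Atil i j := by
    intro i j; subst hAtil
    simp [Matrix.add_apply, Matrix.one_apply]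
    positivity
  have hA_diag : ∀ i, Atil i i = 1 := by
    intro i; subst hAtil; simp [Matrix.add_apply, Matrix.one_apply]
  have hA_adj : ∀ a b, G.Adj a b → Atil a b = 1 := by
    intro a b h; subst hAtil
    simp [Matrix.add_apply, Matrix.one_apply, h, G.ne_of_adj h]
  have hA_symm : ∀ i j, Atil i j = Atil j i := by
    intro i j; subst hAtil
    simp [Matrix.add_apply, Matrix.one_apply, G.adj_comm, eq_comm]
  have hd_pos : ∀ i, 0 < d i := by
    intro i
    have h1 : Atil i i ≤ ∑ j, Atil i j :=
      Finset.single_le_sum (fun j _ => hA_nonneg i j) (Finset.mem_univ i)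
    rw [hd i]; linarith [hA_diag i]
  set sd : Fin n → ℝ := fun i => Real.sqrt (d i) with hsd
  have sd_pos : ∀ i, 0 < sd i := fun i => Real.sqrt_pos.2 (hd_pos i)
  -- S is symmetric
  have hSh : S.IsHermitian := Matrix.IsHermitian.ext fun i j => by
    simp only [star_trivial, hS, hA_symm j i, mul_comm]
  -- Q form to mulVec
  have hQvec : ∀ x : Fin n → ℝ, ∑ i, ∑ j, S i j * x i * x j = ∑ i, x i * (S.mulVec x) i := by
    intro x
    refine Finset.sum_congr rfl fun i _ => ?_
    rw [Matrix.mulVec, dotProduct, Finset.mul_sum]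
    exact Finset.sum_congr rfl fun j _ => by ring
  have sum_nonneg2 : ∀ x : Fin n → ℝ, ∀ ε : ℝ,
      0 ≤ ∑ i, ∑ j, Atil i j * (x i / sd i - ε * (x j / sd j))^2 :=
    fun x ε => Finset.sum_nonneg fun i _ => Finset.sum_nonneg fun j _ =>
      mul_nonneg (hA_nonneg i j) (sq_nonneg _)
  -- eigenvalues
  set μ : Fin n → ℝ := hSh.eigenvalues with hμ
  set U : Matrix (Fin n) (Fin n) ℝ := (hSh.eigenvectorUnitary : Matrix (Fin n) (Fin n) ℝ) with hU
  have hspec : S = U * Matrix.diagonal μ * star U := by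
    have := hSh.spectral_theorem
    simpa using this
  have hbounds : ∀ i, -1 < μ i ∧ μ i ≤ 1 := by
    intro i
    set v : Fin n → ℝ := ⇑(hSh.eigenvectorBasis i) with hv
    have hvec : S.mulVec v = μ i • v := hSh.mulVec_eigenvectorBasis i
    have hnorm : ‖hSh.eigenvectorBasis i‖ = 1 := hSh.eigenvectorBasis.orthonormal.1 i
    have hsum : ∑ j, v j ^ 2 = 1 := by
      have h1 : ‖hSh.eigenvectorBasis i‖ = Real.sqrt (∑ j, ‖v j‖ ^ 2) :=
        EuclideanSpace.norm_eq _
      rw [hnorm] at h1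
      have h2 : ∑ j, ‖v j‖ ^ 2 = ∑ j, v j ^ 2 := by
        exact Finset.sum_congr rfl fun j _ => by rw [Real.norm_eq_abs, sq_abs]
      have h3 := Real.sqrt_eq_one.mp h1.symm
      rw [← h2]; exact h3
    have hQ : ∑ i', ∑ j, S i' j * v i' * v j = μ i := by
      rw [hQvec v, hvec]
      simp only [Pi.smul_apply, smul_eq_mul]
      calc ∑ k, v k * (μ i * v k) = μ i * ∑ k, v k ^ 2 := by
            rw [Finset.mul_sum]; exact Finset.sum_congr rfl fun k _ => by ring
        _ = μ i := by rw [hsum]; ring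
    constructor
    · -- -1 < μ i
      have hq := quad_id Atil d hd hd_pos hA_symm S hS v (-1) (Or.inr rfl)
      rw [hQ, hsum] at hq
      -- diagonal lower bound
      have hdiag : ∑ k, Atil k k * (v k / sd k - (-1) * (v k / sd k))^2
          ≤ ∑ k, ∑ j, Atil k j * (v k / sd k - (-1) * (v j / sd j))^2 :=
        Finset.sum_le_sum fun k _ =>
          Finset.single_le_sum (f := fun j => Atil k j * (v k / sd k - (-1) * (v j / sd j))^2)
            (fun j _ => mul_nonneg (hA_nonneg k j) (sq_nonneg _)) (Finset.mem_univ k)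
      have hterm : ∀ k, Atil k k * (v k / sd k - (-1) * (v k / sd k))^2
          = 4 * (v k / sd k)^2 := by
        intro k; rw [hA_diag k]; ring
      rw [Finset.sum_congr rfl fun k _ => hterm k] at hdiag
      have hpos : 0 < ∑ k, (v k / sd k)^2 := by
        obtain ⟨k, hk⟩ : ∃ k, v k ≠ 0 := by
          by_contra hall
          push_neg at hall
          rw [Finset.sum_congr rfl fun j _ => by rw [hall j]] at hsum
          simp at hsum
        refine Finset.sum_pos' (fun j _ => sq_nonneg _) ⟨k, Finset.mem_univ k, ?_⟩
        exact pow_two_pos_of_ne_zero (div_ne_zero hk (sd_pos k).ne')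
      have h4 : 4 * ∑ k, (v k / sd k)^2 = ∑ k, 4 * (v k / sd k)^2 := Finset.mul_sum _ _ _
      nlinarith
    · -- μ i ≤ 1
      have hq := quad_id Atil d hd hd_pos hA_symm S hS v 1 (Or.inl rfl)
      rw [hQ, hsum] at hq
      have := sum_nonneg2 v 1
      nlinarith
  -- unitary facts
  have hUU : U * star U = 1 := Matrix.mem_unitaryGroup_iff.mp hSh.eigenvectorUnitary.2
  have hU'U : star U * U = 1 := Matrix.mem_unitaryGroup_iff'.mp hSh.eigenvectorUnitary.2
  have hcancel : ∀ {m : ℕ} (Z : Matrix (Fin n) (Fin m) ℝ), star U * (U * Z) = Z := by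
    intro m Z; rw [← Matrix.mul_assoc, hU'U, Matrix.one_mul]
  have hpow : ∀ K : ℕ, S ^ K = U * Matrix.diagonal (fun i => μ i ^ K) * star U := by
    intro K
    induction K with
    | zero =>
      simp only [pow_zero]
      rw [show Matrix.diagonal (fun _ : Fin n => (1 : ℝ)) = 1 from Matrix.diagonal_one,
        Matrix.mul_one, hUU]
    | succ K ih =>
      rw [pow_succ, ih]
      nth_rewrite 1 [hspec]
      calc U * Matrix.diagonal (fun i => μ i ^ K) * star U * (U * Matrix.diagonal μ * star U)
          = U * (Matrix.diagonal (fun i => μ i ^ K) *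
              (star U * (U * (Matrix.diagonal μ * star U)))) := by
            simp only [Matrix.mul_assoc]
        _ = U * (Matrix.diagonal (fun i => μ i ^ K) * (Matrix.diagonal μ * star U)) := by
            rw [hcancel]
        _ = U * ((Matrix.diagonal (fun i => μ i ^ K) * Matrix.diagonal μ) * star U) := by
            simp only [Matrix.mul_assoc]
        _ = U * Matrix.diagonal (fun i => μ i ^ (K + 1)) * star U := by
            rw [Matrix.diagonal_mul_diagonal]
            have hμe : (fun i => μ i ^ K * μ i) = fun i => μ i ^ (K + 1) := by
              funext i; rw [pow_succ]
            rw [hμe, Matrix.mul_assoc]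
  -- limit diagonal
  set e : Fin n → ℝ := fun i => if μ i = 1 then (1 : ℝ) else 0 with he
  have htendμ : Filter.Tendsto (fun K : ℕ => fun i => μ i ^ K) Filter.atTop (nhds e) := by
    rw [tendsto_pi_nhds]
    intro i
    by_cases h : μ i = 1
    · have h1 : e i = 1 := by simp [he, h]
      rw [h1, h]
      simp only [one_pow]
      exact tendsto_const_nhds
    · have habs : |μ i| < 1 :=
        abs_lt.2 ⟨(hbounds i).1, lt_of_le_of_ne (hbounds i).2 h⟩
      simpa [he, h] using tendsto_pow_atTop_nhds_zero_of_abs_lt_one habs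
  set F : (Fin n → ℝ) → Matrix (Fin n) (Fin f) ℝ :=
    fun m => U * Matrix.diagonal m * (star U * X) with hF
  have hcontF : Continuous F :=
    (continuous_const.matrix_mul (continuous_id.matrix_diagonal)).matrix_mul continuous_const
  have hFK : ∀ K : ℕ, S ^ K * X = F (fun i => μ i ^ K) := fun K => by
    rw [hpow K, Matrix.mul_assoc]
  refine ⟨F e, ?_, ?_⟩
  · have h := (hcontF.tendsto e).comp htendμ
    have heq : (fun K : ℕ => S ^ K * X) = fun K => F (fun i => μ i ^ K) := funext hFK
    rw [heq]
    exact h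
  · -- structure of the limit
    have hDe : Matrix.diagonal μ * Matrix.diagonal e = Matrix.diagonal e := by
      rw [Matrix.diagonal_mul_diagonal]
      have hμe : (fun i => μ i * e i) = e := by
        funext i
        by_cases h : μ i = 1 <;> simp [he, h]
      rw [hμe]
    have hSY : S * F e = F e := by
      rw [hF]
      calc S * (U * Matrix.diagonal e * (star U * X))
          = U * (Matrix.diagonal μ *
              (star U * (U * (Matrix.diagonal e * (star U * X))))) := by
            rw [hspec]; simp only [Matrix.mul_assoc]
        _ = U * (Matrix.diagonal μ * (Matrix.diagonal e * (star U * X))) := by rw [hcancel]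
        _ = U * ((Matrix.diagonal μ * Matrix.diagonal e) * (star U * X)) := by
            simp only [Matrix.mul_assoc]
        _ = U * Matrix.diagonal e * (star U * X) := by rw [hDe, Matrix.mul_assoc]
    have hharm : ∀ (j : Fin f) (a b : Fin n), G.Adj a b →
        F e a j / sd a = F e b j / sd b := by
      intro j a b hab
      set w : Fin n → ℝ := fun i => F e i j with hw
      have hwv : S.mulVec w = w := by
        funext i
        have h0 : (S * F e) i j = F e i j := by rw [hSY]
        simpa [Matrix.mul_apply, Matrix.mulVec, dotProduct, hw] using h0
      have hQw : ∑ i', ∑ j', S i' j' * w i' * w j' = ∑ i', w i' ^ 2 := by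
        rw [hQvec w, hwv]
        exact Finset.sum_congr rfl fun i _ => (sq (w i)).symm
      have hzero : ∑ i', ∑ j', Atil i' j' * (w i' / sd i' - 1 * (w j' / sd j'))^2 = 0 := by
        have hq := quad_id Atil d hd hd_pos hA_symm S hS w 1 (Or.inl rfl)
        rw [hQw] at hq
        rw [hq]; ring
      have h1 := (Finset.sum_eq_zero_iff_of_nonneg (fun i _ => Finset.sum_nonneg
          fun j' _ => mul_nonneg (hA_nonneg i j') (sq_nonneg _))).mp hzero a (Finset.mem_univ a)
      have h2 := (Finset.sum_eq_zero_iff_of_nonneg (fun j' _ =>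
          mul_nonneg (hA_nonneg a j') (sq_nonneg _))).mp h1 b (Finset.mem_univ b)
      rw [hA_adj a b hab, one_mul] at h2
      have h3 : w a / sd a - 1 * (w b / sd b) = 0 := by
        have := (pow_eq_zero_iff two_ne_zero).mp h2
        exact this
      rw [one_mul] at h3
      have := sub_eq_zero.mp h3
      exact this
    set f0 : Fin n → Fin f → ℝ := fun v j => F e v j / sd v with hf0
    have hf0adj : ∀ a b : Fin n, G.Adj a b → f0 a = f0 b := by
      intro a b hab
      funext j
      exact hharm j a b hab
    have hf0walk : ∀ (a b : Fin n), G.Walk a b → f0 a = f0 b := by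
      intro a b p
      induction p with
      | nil => rfl
      | cons h p ih => exact (hf0adj _ _ h).trans ih
    refine ⟨SimpleGraph.ConnectedComponent.lift f0 (fun v w p _ => hf0walk v w p), fun v => ?_⟩
    rw [SimpleGraph.ConnectedComponent.lift_mk]
    funext j
    simp only [hf0, Pi.smul_apply, smul_eq_mul]
    rw [mul_comm, div_mul_cancel₀ _ (sd_pos v).ne']
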